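/- Let π : (0,1) × ℕ → (0,1], written π_n(p), satisfy: π_n(p) is nonincreasing in n; π_n(p·π_m(p)) ≥ π_n(p)/π_{n+m}(p) for all p ∈ (0,1), m,n ≥ 1; and π_n(p) ≤ 1. Then for every p ∈ (0,1) and m ≥ 1: ∏_{i=1}^{k} π_{im}(p·π_m(p)) ≥ π_m(p)/π_{(k+1)m}(p) ≥ π_m(p) for every k ≥ 1, hence the infinite product ∏_{i≥1} π_{im}(p·π_m(p)) ≥ π_m(p). -/

import Mathlib

open Filter

theorem telescoping_lower_bound (π : ℝ → ℕ → ℝ)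
    (hpos : ∀ p ∈ Set.Ioo (0 : ℝ) 1, ∀ n, 0 < π p n)
    (hle : ∀ p ∈ Set.Ioo (0 : ℝ) 1, ∀ n, π p n ≤ 1)
    (hanti : ∀ p ∈ Set.Ioo (0 : ℝ) 1, Antitone (π p))
    (hkey : ∀ p ∈ Set.Ioo (0 : ℝ) 1, ∀ m n : ℕ, 1 ≤ m → 1 ≤ n →
      π p n / π p (n + m) ≤ π (p * π p m) n) :
    ∀ p ∈ Set.Ioo (0 : ℝ) 1, ∀ m : ℕ, 1 ≤ m → ∀ k : ℕ, 1 ≤ k →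
      (π p m / π p ((k + 1) * m) ≤ ∏ i ∈ Finset.Icc 1 k, π (p * π p m) (i * m)) ∧
        π p m ≤ ∏ i ∈ Finset.Icc 1 k, π (p * π p m) (i * m) ∧
        ∀ L : ℝ, Tendsto (fun k => ∏ i ∈ Finset.Icc 1 k, π (p * π p m) (i * m))
            atTop (nhds L) → π p m ≤ L := by
  intro p hp m hm
  have hq : p * π p m ∈ Set.Ioo (0 : ℝ) 1 := by
    constructor
    · exact mul_pos hp.1 (hpos p hp m)
    · calc p * π p m ≤ p * 1 := by
            exact mul_le_mul_of_nonneg_left (hle p hp m) hp.1.le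
        _ < 1 := by simpa using hp.2
  -- main telescoping inequality, by induction on k
  have main : ∀ k : ℕ, 1 ≤ k →
      π p m / π p ((k + 1) * m) ≤ ∏ i ∈ Finset.Icc 1 k, π (p * π p m) (i * m) := by
    intro k hk
    induction k with
    | zero => omega
    | succ n ih =>
      rcases Nat.eq_or_lt_of_le hk with h1 | h1
      · -- k = 1
        have : n = 0 := by omega
        subst this
        simp only [Finset.Icc_self, Finset.prod_singleton, one_mul]
        have := hkey p hp m m hm hm
        calc π p m / π p ((1 + 1) * m) = π p m / π p (m + m) := by ring_nf
          _ ≤ π (p * π p m) m := this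
      · have hn : 1 ≤ n := by omega
        have step : π p ((n + 1) * m) / π p ((n + 1) * m + m) ≤
            π (p * π p m) ((n + 1) * m) :=
          hkey p hp m ((n + 1) * m) hm (by nlinarith)
        have hprod : (∏ i ∈ Finset.Icc 1 (n + 1), π (p * π p m) (i * m)) =
            (∏ i ∈ Finset.Icc 1 n, π (p * π p m) (i * m)) * π (p * π p m) ((n + 1) * m) := by
          rw [← Finset.prod_Icc_succ_top (by omega)]
        rw [hprod]
        have h2 : π p m / π p ((n + 1) * m) ≤ ∏ i ∈ Finset.Icc 1 n, π (p * π p m) (i * m) :=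
          ih hn
        have hpos1 := hpos p hp ((n + 1) * m)
        have hpos2 := hpos p hp ((n + 1) * m + m)
        have hpos3 := hpos p hp m
        have hpos4 := hpos (p * π p m) hq ((n + 1) * m)
        calc π p m / π p ((n + 1 + 1) * m)
            = (π p m / π p ((n + 1) * m)) *
              (π p ((n + 1) * m) / π p ((n + 1) * m + m)) := by
              have hidx : (n + 1 + 1) * m = (n + 1) * m + m := by ring
              rw [hidx]
              field_simp
          _ ≤ (∏ i ∈ Finset.Icc 1 n, π (p * π p m) (i * m)) * π (p * π p m) ((n + 1) * m) := by
              apply mul_le_mul h2 step (by positivity)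
              exact Finset.prod_nonneg fun i _ => (hpos (p * π p m) hq (i * m)).le
  -- second part: π p m ≤ product
  have second : ∀ k : ℕ, 1 ≤ k → π p m ≤ ∏ i ∈ Finset.Icc 1 k, π (p * π p m) (i * m) := by
    intro k hk
    refine le_trans ?_ (main k hk)
    rw [le_div_iff₀ (hpos p hp ((k + 1) * m))]
    calc π p m * π p ((k + 1) * m) ≤ π p m * 1 :=
          mul_le_mul_of_nonneg_left (hle p hp _) (hpos p hp m).le
      _ = π p m := mul_one _
  intro k hk
  refine ⟨main k hk, second k hk, ?_⟩
  intro L hL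
  have : ∀ᶠ j in atTop, π p m ≤ ∏ i ∈ Finset.Icc 1 j, π (p * π p m) (i * m) := by
    filter_upwards [eventually_ge_atTop 1] with j hj using second j hj
  exact ge_of_tendsto hL this
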